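/- arXiv:2509.15676 — 2 statements merged into one kernel-verified Lean document; each statement's English description precedes it below -/
import Mathlib

section
/- Let β > 0 and define g(S) = log det(β I + Σ_{x ∈ S} x xᵀ). Then g is submodular: for all finite sets S ⊆ L ⊆ R^d and x ∉ L, g(S ∪ {x}) - g(S) ≥ g(L ∪ {x}) - g(L). -/
open Matrix
open Matrix

variable {d : ℕ}

lemma vecMulVec_psd (v : Fin d → ℝ) : (vecMulVec v v).PosSemidef := by
  rw [posSemidef_iff_dotProduct_mulVec]
  constructor
  · ext i j
    simp [vecMulVec_apply, conjTranspose_apply, mul_comm]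
  · intro x
    have : vecMulVec v v *ᵥ x = (v ⬝ᵥ x) • v := by
      ext i; simp [vecMulVec_apply, mulVec, dotProduct, Finset.mul_sum, mul_comm, mul_assoc, mul_left_comm]
    rw [this]
    simp only [star_trivial, dotProduct_smul]
    have : x ⬝ᵥ v = v ⬝ᵥ x := dotProduct_comm _ _
    rw [smul_eq_mul, this]
    exact mul_self_nonneg _

lemma smul_one_posDef {β : ℝ} (hβ : 0 < β) :
    (β • (1 : Matrix (Fin d) (Fin d) ℝ)).PosDef := by
  rw [posDef_iff_dotProduct_mulVec]
  constructor
  · ext i j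
    simp [conjTranspose_apply, Matrix.one_apply, Matrix.smul_apply]
    by_cases h : i = j <;> simp [h, Matrix.one_apply, eq_comm]
  · intro x hx
    have : (β • (1 : Matrix (Fin d) (Fin d) ℝ)) *ᵥ x = β • x := by
      simp [smul_mulVec]
    rw [this]
    simp only [star_trivial, dotProduct_smul, smul_eq_mul]
    exact mul_pos hβ (lt_of_le_of_ne (Finset.sum_nonneg fun i _ => mul_self_nonneg _) (fun h => hx (dotProduct_self_eq_zero.mp h.symm)))

lemma sum_psd (T : Finset (Fin d → ℝ)) :
    (∑ v ∈ T, vecMulVec v v).PosSemidef := by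
  induction T using Finset.induction_on with
  | empty => simpa using Matrix.PosSemidef.zero
  | insert _ _ h ih => rw [Finset.sum_insert h]; exact (vecMulVec_psd _).add ih

lemma M_posDef {β : ℝ} (hβ : 0 < β) (T : Finset (Fin d → ℝ)) :
    (β • (1 : Matrix (Fin d) (Fin d) ℝ) + ∑ v ∈ T, vecMulVec v v).PosDef :=
  (smul_one_posDef hβ).add_posSemidef (sum_psd T)

lemma det_add_vecMulVec {V : Matrix (Fin d) (Fin d) ℝ} (hV : V.PosDef) (x : Fin d → ℝ) :
    (V + vecMulVec x x).det = V.det * (1 + x ⬝ᵥ V⁻¹ *ᵥ x) := by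
  rw [vecMulVec_eq Unit, det_add_replicateCol_mul_replicateRow (isUnit_iff_ne_zero.mpr hV.det_pos.ne')]
  congr 1
  rw [det_unique, Matrix.add_apply, Matrix.one_apply_eq]
  congr 1
  simp only [Matrix.mul_apply, Matrix.replicateRow_apply, Matrix.replicateCol_apply, dotProduct, mulVec,
    Finset.mul_sum, Finset.sum_mul]
  rw [Finset.sum_comm]
  exact Finset.sum_congr rfl fun i _ => Finset.sum_congr rfl fun j _ => by ring

lemma psd_sym {A : Matrix (Fin d) (Fin d) ℝ} (hA : A.IsHermitian) (u v : Fin d → ℝ) :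
    u ⬝ᵥ A *ᵥ v = v ⬝ᵥ A *ᵥ u := by
  have ht : Aᵀ = A := by
    ext i j; have := congrFun (congrFun hA i) j
    simpa [conjTranspose_apply] using this
  rw [dotProduct_mulVec, ← mulVec_transpose, ht, dotProduct_comm]

lemma psd_cs {A : Matrix (Fin d) (Fin d) ℝ} (hA : A.PosSemidef) (u v : Fin d → ℝ) :
    (u ⬝ᵥ A *ᵥ v)^2 ≤ (u ⬝ᵥ A *ᵥ u) * (v ⬝ᵥ A *ᵥ v) := by
  set a := v ⬝ᵥ A *ᵥ v
  set p := u ⬝ᵥ A *ᵥ v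
  set c := u ⬝ᵥ A *ᵥ u
  have key : ∀ t : ℝ, 0 ≤ a * (t * t) + (2*p) * t + c := by
    intro t
    have h0 := hA.dotProduct_mulVec_nonneg (u + t • v)
    simp only [star_trivial] at h0
    have expand : (u + t • v) ⬝ᵥ A *ᵥ (u + t • v) = a * (t * t) + (2*p) * t + c := by
      have hsym : v ⬝ᵥ A *ᵥ u = p := psd_sym hA.1 v u ▸ rfl
      simp only [mulVec_add, mulVec_smul, dotProduct_add, add_dotProduct,
        dotProduct_smul, smul_dotProduct, smul_eq_mul]
      rw [hsym]
      ring
    linarith [expand ▸ h0]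
  have hd := discrim_le_zero key
  rw [discrim] at hd
  nlinarith

lemma quad_inv_antitone {A B : Matrix (Fin d) (Fin d) ℝ} (hA : A.PosDef) (hB : B.PosDef)
    (hAB : (B - A).PosSemidef) (x : Fin d → ℝ) :
    x ⬝ᵥ B⁻¹ *ᵥ x ≤ x ⬝ᵥ A⁻¹ *ᵥ x := by
  set y := B⁻¹ *ᵥ x with hy
  set z := A⁻¹ *ᵥ x with hz
  have hBy : B *ᵥ y = x := by
    rw [hy, mulVec_mulVec, Matrix.mul_nonsing_inv _ (isUnit_iff_ne_zero.mpr hB.det_pos.ne'),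
      one_mulVec]
  have hAz : A *ᵥ z = x := by
    rw [hz, mulVec_mulVec, Matrix.mul_nonsing_inv _ (isUnit_iff_ne_zero.mpr hA.det_pos.ne'),
      one_mulVec]
  set p := x ⬝ᵥ y with hp
  set q := x ⬝ᵥ z with hq
  have hp0 : 0 ≤ p := by simpa using hB.inv.posSemidef.dotProduct_mulVec_nonneg x
  have hq0 : 0 ≤ q := by simpa using hA.inv.posSemidef.dotProduct_mulVec_nonneg x
  have ht0 : 0 ≤ y ⬝ᵥ A *ᵥ y := by simpa using hA.posSemidef.dotProduct_mulVec_nonneg y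
  have hyAy : y ⬝ᵥ A *ᵥ y ≤ p := by
    have h0 := hAB.dotProduct_mulVec_nonneg y
    simp only [star_trivial, sub_mulVec, dotProduct_sub] at h0
    have : y ⬝ᵥ B *ᵥ y = p := by rw [hBy, hp, dotProduct_comm]
    linarith
  have hcs := psd_cs hA.posSemidef y z
  have h1 : y ⬝ᵥ A *ᵥ z = p := by rw [hAz, hp, dotProduct_comm]
  have h2 : z ⬝ᵥ A *ᵥ z = q := by
    rw [hAz, hq, dotProduct_comm]
  rw [h1, h2] at hcs
  nlinarith

lemma marginal {β : ℝ} (hβ : 0 < β) (T : Finset (Fin d → ℝ)) (x : Fin d → ℝ) (hxT : x ∉ T) :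
    Real.log (β • (1 : Matrix (Fin d) (Fin d) ℝ) + ∑ v ∈ insert x T, vecMulVec v v).det
      - Real.log (β • (1 : Matrix (Fin d) (Fin d) ℝ) + ∑ v ∈ T, vecMulVec v v).det
    = Real.log (1 + x ⬝ᵥ (β • (1 : Matrix (Fin d) (Fin d) ℝ) + ∑ v ∈ T, vecMulVec v v)⁻¹ *ᵥ x) := by
  set V := β • (1 : Matrix (Fin d) (Fin d) ℝ) + ∑ v ∈ T, vecMulVec v v with hV
  have hVpd : V.PosDef := M_posDef hβ T
  have hins : β • (1 : Matrix (Fin d) (Fin d) ℝ) + ∑ v ∈ insert x T, vecMulVec v v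
      = V + vecMulVec x x := by
    rw [Finset.sum_insert hxT, hV]; abel
  have hq0 : 0 ≤ x ⬝ᵥ V⁻¹ *ᵥ x := by simpa using hVpd.inv.posSemidef.dotProduct_mulVec_nonneg x
  rw [hins, det_add_vecMulVec hVpd,
    Real.log_mul hVpd.det_pos.ne' (by linarith : (1 : ℝ) + x ⬝ᵥ V⁻¹ *ᵥ x ≠ 0)]
  ring

/-- Submodularity (diminishing returns) of `g(S) = log det (β I + Σ_{v∈S} v vᵀ)`. -/
theorem logdet_submodular {d : ℕ} (β : ℝ) (hβ : 0 < β)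
    (g : Finset (Fin d → ℝ) → ℝ)
    (hg : ∀ S : Finset (Fin d → ℝ),
      g S = Real.log (β • (1 : Matrix (Fin d) (Fin d) ℝ) + ∑ v ∈ S, vecMulVec v v).det)
    (S L : Finset (Fin d → ℝ)) (hSL : S ⊆ L) (x : Fin d → ℝ) (hx : x ∉ L) :
    g (insert x L) - g L ≤ g (insert x S) - g S := by
  have hxS : x ∉ S := fun h => hx (hSL h)
  rw [hg, hg, hg, hg, marginal hβ S x hxS, marginal hβ L x hx]
  set A := β • (1 : Matrix (Fin d) (Fin d) ℝ) + ∑ v ∈ S, vecMulVec v v with hA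
  set B := β • (1 : Matrix (Fin d) (Fin d) ℝ) + ∑ v ∈ L, vecMulVec v v with hB
  have hApd : A.PosDef := M_posDef hβ S
  have hBpd : B.PosDef := M_posDef hβ L
  have hBA : (B - A).PosSemidef := by
    have : B - A = ∑ v ∈ L \ S, vecMulVec v v := by
      rw [hA, hB, ← Finset.sum_sdiff hSL]; abel
    rw [this]; exact sum_psd _
  have hle := quad_inv_antitone hApd hBpd hBA x
  have hq0 : 0 ≤ x ⬝ᵥ B⁻¹ *ᵥ x := by simpa using hBpd.inv.posSemidef.dotProduct_mulVec_nonneg x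
  exact Real.log_le_log (by linarith) (by linarith)
end

section
/- Let f be a monotone nondecreasing set function on a finite ground set X with f(∅) = 0 and submodularity ratio γ ∈ (0,1] at cardinality k (i.e., for all disjoint S, L with |L| ≤ k, Σ_{x ∈ L} (f(S ∪ {x}) - f(S)) ≥ γ·(f(S ∪ L) - f(S))). Then the greedy algorithm which at each of k steps adds the element of maximum marginal gain returns a set S_greedy with f(S_greedy) ≥ (1 - e^{-γ})·max_{|S| ≤ k} f(S). -/
open Finset

/-- Greedy guarantee for monotone set functions with submodularity ratio `γ`. -/
theorem greedy_approx_submod_ratio {X : Type*} [Fintype X] [DecidableEq X]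
    (f : Finset X → ℝ) (k : ℕ) (γ : ℝ) (hγ0 : 0 < γ) (hγ1 : γ ≤ 1)
    (hf0 : f ∅ = 0)
    (hmono : ∀ S T : Finset X, S ⊆ T → f S ≤ f T)
    (hratio : ∀ S L : Finset X, Disjoint S L → L.card ≤ k →
      γ * (f (S ∪ L) - f S) ≤ ∑ x ∈ L, (f (insert x S) - f S))
    (S : ℕ → Finset X) (hS0 : S 0 = ∅)
    (hgreedy : ∀ i < k, ∃ x ∉ S i, S (i + 1) = insert x (S i) ∧
      ∀ y ∉ S i, f (insert y (S i)) ≤ f (insert x (S i))) :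
    ∀ T : Finset X, T.card ≤ k → (1 - Real.exp (-γ)) * f T ≤ f (S k) := by
  intro T hT
  rcases Nat.eq_zero_or_pos k with hk | hk
  · subst hk
    have : T = ∅ := Finset.card_eq_zero.mp (Nat.le_zero.mp hT)
    rw [this, hf0, hS0, hf0]
    simp
  have hkpos : (0:ℝ) < k := by exact_mod_cast hk
  have hk1 : (1:ℝ) ≤ k := by exact_mod_cast hk
  have hfT0 : 0 ≤ f T := hf0 ▸ hmono ∅ T (empty_subset T)
  -- key step
  have key : ∀ i < k, f T - f (S (i+1)) ≤ (1 - γ/k) * (f T - f (S i)) := by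
    intro i hi
    obtain ⟨x, hx, hSi1, hmax⟩ := hgreedy i hi
    have hg0 : f (S i) ≤ f (S (i+1)) := by
      rw [hSi1]; exact hmono _ _ (subset_insert _ _)
    have hdisj : Disjoint (S i) (T \ S i) := disjoint_sdiff
    have hcard : (T \ S i).card ≤ k := le_trans (card_le_card sdiff_subset) hT
    have h1 := hratio (S i) (T \ S i) hdisj hcard
    have h2 : f T ≤ f (S i ∪ (T \ S i)) := by
      apply hmono
      intro a ha
      by_cases h : a ∈ S i
      · exact mem_union_left _ h
      · exact mem_union_right _ (mem_sdiff.mpr ⟨ha, h⟩)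
    have h3 : ∑ y ∈ T \ S i, (f (insert y (S i)) - f (S i)) ≤
        ((T \ S i).card : ℝ) * (f (S (i+1)) - f (S i)) := by
      calc ∑ y ∈ T \ S i, (f (insert y (S i)) - f (S i))
          ≤ ∑ _y ∈ T \ S i, (f (S (i+1)) - f (S i)) := by
            apply Finset.sum_le_sum
            intro y hy
            have hyn : y ∉ S i := (mem_sdiff.mp hy).2
            have := hmax y hyn
            rw [hSi1]
            linarith
        _ = ((T \ S i).card : ℝ) * (f (S (i+1)) - f (S i)) := by
            rw [Finset.sum_const, nsmul_eq_mul]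
    have h4 : ((T \ S i).card : ℝ) ≤ k := by exact_mod_cast hcard
    have hgain : f (S i) ≤ f (S (i+1)) := hg0
    have h5 : ((T \ S i).card : ℝ) * (f (S (i+1)) - f (S i)) ≤
        (k:ℝ) * (f (S (i+1)) - f (S i)) := by
      apply mul_le_mul_of_nonneg_right h4 (by linarith)
    have h6 : γ * (f T - f (S i)) ≤ (k:ℝ) * (f (S (i+1)) - f (S i)) := by
      have : γ * (f T - f (S i)) ≤ γ * (f (S i ∪ (T \ S i)) - f (S i)) := by
        apply mul_le_mul_of_nonneg_left (by linarith) (le_of_lt hγ0)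
      linarith
    have h7 : γ / k * (f T - f (S i)) ≤ f (S (i+1)) - f (S i) := by
      rw [div_mul_eq_mul_div, div_le_iff₀ hkpos]
      nlinarith
    nlinarith
  -- iterate
  have hiter : ∀ i ≤ k, f T - f (S i) ≤ (1 - γ/k)^i * f T := by
    intro i
    induction i with
    | zero => intro _; simp [hS0, hf0]
    | succ n ih =>
      intro hn
      have hnk : n < k := hn
      have h1 := key n hnk
      have h2 := ih (le_of_lt hnk)
      have h0 : 0 ≤ 1 - γ/k := by
        have : γ / k ≤ 1 := by
          rw [div_le_one hkpos]; linarith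
        linarith
      calc f T - f (S (n+1)) ≤ (1 - γ/k) * (f T - f (S n)) := h1
        _ ≤ (1 - γ/k) * ((1 - γ/k)^n * f T) := mul_le_mul_of_nonneg_left h2 h0
        _ = (1 - γ/k)^(n+1) * f T := by ring
  have hmain := hiter k le_rfl
  -- (1 - γ/k)^k ≤ exp(-γ)
  have h0 : 0 ≤ 1 - γ/k := by
    have : γ / k ≤ 1 := by rw [div_le_one hkpos]; linarith
    linarith
  have hexp : (1 - γ/k)^k ≤ Real.exp (-γ) := by
    have h1 : 1 - γ/k ≤ Real.exp (-(γ/k)) := by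
      have := Real.add_one_le_exp (-(γ/k))
      linarith
    calc (1 - γ/k)^k ≤ (Real.exp (-(γ/k)))^k := pow_le_pow_left₀ h0 h1 k
      _ = Real.exp ((k:ℝ) * (-(γ/k))) := by rw [← Real.exp_nat_mul]
      _ = Real.exp (-γ) := by
          congr 1
          field_simp
  have hfinal : (1 - γ/k)^k * f T ≤ Real.exp (-γ) * f T :=
    mul_le_mul_of_nonneg_right hexp hfT0
  linarith
end
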